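/- Under the assumption that (1/ε_n)_n grows sub-exponentially (i.e., (1/ε_n) is o(e^{rn}) for every r > 0) and P ≪ Q, eventually in n, the optimal Type II error exponent satisfies -(1/n) log β_n(ε_n) ≥ D(P‖Q) - C_X(P,Q)·√(2 ln(1/ε_n)/n). -/

import Mathlib

open Finset Filter Real
open scoped BigOperators Classical ENNReal

/-- The n-fold product (i.i.d.) probability mass function on `Fin n → X`. -/
noncomputable def prodP {X : Type*} [Fintype X] (P : X → ℝ) (n : ℕ) (x : Fin n → X) : ℝ :=
  ∏ i, P (x i)

/-- Kullback–Leibler divergence (natural logarithm). -/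
noncomputable def KL {X : Type*} [Fintype X] (P Q : X → ℝ) : ℝ :=
  ∑ x, P x * Real.log (P x / Q x)

/-- `C_X(P,Q) = sup_{x : P(x) > 0} |log (P(x)/Q(x))|`. -/
noncomputable def Cx {X : Type*} [Fintype X] (P Q : X → ℝ) : ℝ :=
  ⨆ x : {x : X // 0 < P x}, |Real.log (P x.1 / Q x.1)|

/-- Minimal Type II error probability under a Type I error constraint `ε`. -/
noncomputable def beta {X : Type*} [Fintype X] [DecidableEq X] (P Q : X → ℝ) (n : ℕ)
    (ε : ℝ) : ℝ :=
  sInf {b : ℝ | ∃ A : Finset (Fin n → X),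
    (∑ x ∈ Aᶜ, prodP P n x) ≤ ε ∧ b = ∑ x ∈ A, prodP Q n x}

/-- Core inequality behind Hoeffding's lemma:
`cosh u + s sinh u ≤ exp (s u + u²/2)` for `|s| ≤ 1`. -/
lemma hoeffding_core (s : ℝ) (hs : |s| ≤ 1) (u : ℝ) :
    Real.cosh u + s * Real.sinh u ≤ Real.exp (s * u + u ^ 2 / 2) := by
  have habs : ∀ v : ℝ, |Real.sinh v| < Real.cosh v := by
    intro v
    have h1 : |Real.sinh v| ^ 2 < Real.cosh v ^ 2 := by
      rw [sq_abs, Real.cosh_sq]; nlinarith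
    exact lt_of_pow_lt_pow_left₀ 2 (Real.cosh_pos v).le h1
  have hgpos : ∀ v : ℝ, 0 < Real.cosh v + s * Real.sinh v := by
    intro v
    have h2 : |s * Real.sinh v| ≤ |Real.sinh v| := by
      rw [abs_mul]
      exact mul_le_of_le_one_left (abs_nonneg _) hs
    have h3 := habs v
    have h4 := neg_abs_le (s * Real.sinh v)
    linarith
  set g : ℝ → ℝ := fun v => Real.cosh v + s * Real.sinh v with hgdef
  set g' : ℝ → ℝ := fun v => Real.sinh v + s * Real.cosh v with hg'def
  have hdg : ∀ v, HasDerivAt g (g' v) v := fun v =>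
    (Real.hasDerivAt_cosh v).add ((Real.hasDerivAt_sinh v).const_mul s)
  have hdg' : ∀ v, HasDerivAt g' (g v) v := fun v =>
    (Real.hasDerivAt_sinh v).add ((Real.hasDerivAt_cosh v).const_mul s)
  set H : ℝ → ℝ := fun v => s + v - g' v / g v with hHdef
  have hdH : ∀ v, HasDerivAt H (1 - (g v * g v - g' v * g' v) / (g v) ^ 2) v := by
    intro v
    exact ((hasDerivAt_id v).const_add s).sub ((hdg' v).div (hdg v) (hgpos v).ne')
  have hH'nonneg : ∀ v, 0 ≤ 1 - (g v * g v - g' v * g' v) / (g v) ^ 2 := by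
    intro v
    have hg2 : (0:ℝ) < (g v) ^ 2 := pow_pos (hgpos v) 2
    rw [sub_nonneg, div_le_one hg2]
    nlinarith [sq_nonneg (g' v)]
  have hHmono : Monotone H :=
    monotone_of_deriv_nonneg (fun v => (hdH v).differentiableAt)
      (fun v => (hdH v).deriv ▸ hH'nonneg v)
  have hH0 : H 0 = 0 := by
    simp [hHdef, hgdef, hg'def, Real.cosh_zero, Real.sinh_zero]
  set G : ℝ → ℝ := fun v => s * v + v ^ 2 / 2 - Real.log (g v) with hGdef
  have hdG : ∀ v, HasDerivAt G (H v) v := by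
    intro v
    have h1 : HasDerivAt (fun w : ℝ => s * w + w ^ 2 / 2) (s + v) v := by
      have := ((hasDerivAt_id v).const_mul s).add ((hasDerivAt_pow 2 v).div_const 2)
      refine this.congr_deriv ?_
      simp
    have h2 : HasDerivAt (fun w => Real.log (g w)) (g' v / g v) v := by
      have := (Real.hasDerivAt_log (hgpos v).ne').comp v (hdg v)
      refine this.congr_deriv ?_
      rw [div_eq_inv_mul]
    exact h1.sub h2
  have hGdiff : Differentiable ℝ G := fun v => (hdG v).differentiableAt
  have hG0 : G 0 = 0 := by
    simp [hGdef, hgdef, Real.cosh_zero, Real.sinh_zero]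
  have hGnonneg : ∀ v, 0 ≤ G v := by
    intro v
    rcases le_total 0 v with hv | hv
    · have hmono := monotoneOn_of_deriv_nonneg (convex_Ici (0:ℝ))
        hGdiff.continuous.continuousOn (hGdiff.differentiableOn)
        (fun x hx => by
          rw [(hdG x).deriv]
          rw [interior_Ici] at hx
          calc (0:ℝ) = H 0 := hH0.symm
          _ ≤ H x := hHmono (le_of_lt hx))
      have := hmono (Set.self_mem_Ici) (Set.mem_Ici.mpr hv) hv
      linarith [hG0 ▸ this]
    · have hanti := antitoneOn_of_deriv_nonpos (convex_Iic (0:ℝ))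
        hGdiff.continuous.continuousOn (hGdiff.differentiableOn)
        (fun x hx => by
          rw [(hdG x).deriv]
          rw [interior_Iic] at hx
          calc H x ≤ H 0 := hHmono (le_of_lt hx)
          _ = 0 := hH0)
      have := hanti (Set.mem_Iic.mpr hv) (Set.self_mem_Iic) hv
      linarith [hG0 ▸ this]
  have hlog : Real.log (g u) ≤ s * u + u ^ 2 / 2 := by
    have := hGnonneg u
    simp only [hGdef] at this
    linarith
  calc g u = Real.exp (Real.log (g u)) := (Real.exp_log (hgpos u)).symm
  _ ≤ Real.exp (s * u + u ^ 2 / 2) := Real.exp_le_exp.mpr hlog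

/-- Chord (convexity) bound for the exponential on `[-c, c]`. -/
lemma exp_chord_bound (c t z : ℝ) (hc : 0 < c) (hz : |z| ≤ c) :
    Real.exp (t * z) ≤ Real.cosh (t * c) + (z / c) * Real.sinh (t * c) := by
  obtain ⟨hz1, hz2⟩ := abs_le.mp hz
  set a : ℝ := (c + z) / (2 * c) with hadef
  set b : ℝ := (c - z) / (2 * c) with hbdef
  have ha : 0 ≤ a := div_nonneg (by linarith) (by linarith)
  have hb : 0 ≤ b := div_nonneg (by linarith) (by linarith)
  have hab : a + b = 1 := by rw [hadef, hbdef]; field_simp; ring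
  have hconv := convexOn_exp.2 (Set.mem_univ (t * c)) (Set.mem_univ (-(t * c))) ha hb hab
  simp only [smul_eq_mul] at hconv
  have harg : a * (t * c) + b * (-(t * c)) = t * z := by
    rw [hadef, hbdef]; field_simp; ring
  rw [harg] at hconv
  calc Real.exp (t * z) ≤ a * Real.exp (t * c) + b * Real.exp (-(t * c)) := hconv
  _ = Real.cosh (t * c) + (z / c) * Real.sinh (t * c) := by
      rw [Real.cosh_eq, Real.sinh_eq, hadef, hbdef]
      field_simp
      ring

/-- Hoeffding's lemma for a finitely supported distribution:
if `|Z x| ≤ c` on the support of `P`, then the mgf of `Z` is bounded. -/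
lemma hoeffding_lemma_finite {X : Type*} [Fintype X] (P Z : X → ℝ)
    (hP0 : ∀ x, 0 ≤ P x) (hP1 : ∑ x, P x = 1) (c t : ℝ) (hc : 0 < c)
    (hZ : ∀ x, 0 < P x → |Z x| ≤ c) :
    ∑ x, P x * Real.exp (t * Z x)
      ≤ Real.exp (t * (∑ x, P x * Z x) + t ^ 2 * c ^ 2 / 2) := by
  set μ : ℝ := ∑ x, P x * Z x with hμdef
  have hterm : ∀ x, |P x * Z x| ≤ P x * c := by
    intro x
    rcases eq_or_lt_of_le (hP0 x) with h | h
    · simp [← h]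
    · rw [abs_mul, abs_of_pos h]
      exact mul_le_mul_of_nonneg_left (hZ x h) (hP0 x)
  have hμle : |μ| ≤ c := by
    calc |μ| ≤ ∑ x, |P x * Z x| := Finset.abs_sum_le_sum_abs _ _
    _ ≤ ∑ x, P x * c := Finset.sum_le_sum (fun x _ => hterm x)
    _ = c := by rw [← Finset.sum_mul, hP1, one_mul]
  have hs : |μ / c| ≤ 1 := by
    rw [abs_div, abs_of_pos hc, div_le_one hc]
    exact hμle
  have step1 : ∑ x, P x * Real.exp (t * Z x)
      ≤ ∑ x, P x * (Real.cosh (t * c) + (Z x / c) * Real.sinh (t * c)) := by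
    apply Finset.sum_le_sum
    intro x _
    rcases eq_or_lt_of_le (hP0 x) with h | h
    · simp [← h]
    · exact mul_le_mul_of_nonneg_left (exp_chord_bound c t (Z x) hc (hZ x h)) (hP0 x)
  have step2 : ∑ x, P x * (Real.cosh (t * c) + (Z x / c) * Real.sinh (t * c))
      = Real.cosh (t * c) + (μ / c) * Real.sinh (t * c) := by
    have : ∀ x : X, P x * (Real.cosh (t * c) + (Z x / c) * Real.sinh (t * c))
        = P x * Real.cosh (t * c) + (P x * Z x) * (Real.sinh (t * c) / c) := by
      intro x; ring
    rw [Finset.sum_congr rfl (fun x _ => this x), Finset.sum_add_distrib,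
      ← Finset.sum_mul, ← Finset.sum_mul, hP1, one_mul, ← hμdef]
    ring
  have step3 : Real.cosh (t * c) + (μ / c) * Real.sinh (t * c)
      ≤ Real.exp (t * μ + t ^ 2 * c ^ 2 / 2) := by
    have h := hoeffding_core (μ / c) hs (t * c)
    have harg : (μ / c) * (t * c) + (t * c) ^ 2 / 2 = t * μ + t ^ 2 * c ^ 2 / 2 := by
      field_simp
    rwa [harg] at h
  exact step1.trans (step2 ▸ step3)

/-- Expanding a power of a sum as a sum over tuples. -/
lemma pow_sum_eq_sum_prod {X : Type*} [Fintype X] (f : X → ℝ) (n : ℕ) :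
    ∑ x : Fin n → X, ∏ i, f (x i) = (∑ y, f y) ^ n := by
  have h := Finset.prod_univ_sum (fun _ : Fin n => (Finset.univ : Finset X)) (fun _ y => f y)
  simp only [Fintype.piFinset_univ] at h
  rw [← h, Finset.prod_const, Finset.card_univ, Fintype.card_fin]

theorem achievability_finite_length_bound
    {X : Type*} [Fintype X] [DecidableEq X] (P Q : X → ℝ)
    (hP0 : ∀ x, 0 ≤ P x) (hP1 : ∑ x, P x = 1)
    (hQ0 : ∀ x, 0 ≤ Q x) (hQ1 : ∑ x, Q x = 1)
    (hac : ∀ x, Q x = 0 → P x = 0) (hD : 0 < KL P Q)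
    (ε : ℕ → ℝ) (hεpos : ∀ n, 0 < ε n) (hε1 : ∀ n, ε n < 1)
    (hsub : ∀ r > 0, Tendsto (fun n : ℕ => (1 / ε n) * Real.exp (-(r * n))) atTop (nhds 0)) :
    ∀ᶠ n : ℕ in atTop,
      KL P Q - Cx P Q * Real.sqrt (2 * Real.log (1 / ε n) / n)
        ≤ -(1 / n : ℝ) * Real.log (beta P Q n (ε n)) := by
  classical
  set c := Cx P Q with hcdef
  set L : X → ℝ := fun x => Real.log (P x / Q x) with hLdef
  have hKL : KL P Q = ∑ x, P x * L x := rfl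
  have hsupp : ∃ x, 0 < P x := by
    by_contra h
    push_neg at h
    have h0 : ∑ x, P x = 0 :=
      Finset.sum_eq_zero fun x _ => le_antisymm (h x) (hP0 x)
    rw [hP1] at h0; norm_num at h0
  have : Nonempty {x : X // 0 < P x} := ⟨⟨hsupp.choose, hsupp.choose_spec⟩⟩
  have hLle : ∀ x, 0 < P x → |L x| ≤ c := by
    intro x hx
    have h := le_ciSup (f := fun p : {x : X // 0 < P x} => |Real.log (P p.1 / Q p.1)|)
      (Set.Finite.bddAbove (Set.finite_range _)) ⟨x, hx⟩
    simpa [hcdef, Cx, hLdef] using h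
  have hKLc : KL P Q ≤ c := by
    rw [hKL]
    calc ∑ x, P x * L x ≤ ∑ x, P x * c := by
          apply Finset.sum_le_sum
          intro x _
          rcases eq_or_lt_of_le (hP0 x) with h | h
          · simp [← h]
          · calc P x * L x ≤ P x * |L x| :=
                  mul_le_mul_of_nonneg_left (le_abs_self _) (hP0 x)
            _ ≤ P x * c := mul_le_mul_of_nonneg_left (hLle x h) (hP0 x)
    _ = c := by rw [← Finset.sum_mul, hP1, one_mul]
  have hcpos : 0 < c := lt_of_lt_of_le hD hKLc
  have hQsupp : ∃ y, 0 < Q y := by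
    by_contra h
    push_neg at h
    have h0 : ∑ y, Q y = 0 := Finset.sum_eq_zero fun y _ => le_antisymm (h y) (hQ0 y)
    rw [hQ1] at h0; norm_num at h0
  set T : Finset ℝ := (Finset.univ.filter (fun y => 0 < Q y)).image Q with hTdef
  have hTne : T.Nonempty := by
    refine ⟨Q hQsupp.choose, ?_⟩
    rw [hTdef]
    exact Finset.mem_image_of_mem Q (by simp [hQsupp.choose_spec])
  set q : ℝ := T.min' hTne with hqdef
  have hqpos : 0 < q := by
    have h := T.min'_mem hTne
    rw [← hqdef, hTdef, Finset.mem_image] at h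
    obtain ⟨y, hy, hyq⟩ := h
    rw [Finset.mem_filter] at hy
    rw [← hyq]
    exact hy.2
  have hqle : ∀ y, 0 < Q y → q ≤ Q y := by
    intro y hy
    rw [hqdef]
    exact T.min'_le (Q y) (by rw [hTdef]; exact Finset.mem_image_of_mem Q (by simp [hy]))
  filter_upwards [eventually_ge_atTop 1] with n hn
  have hnpos : (0:ℝ) < n := by
    have : (0:ℕ) < n := lt_of_lt_of_le Nat.zero_lt_one hn
    exact_mod_cast this
  have hlogε : 0 < Real.log (1 / ε n) :=
    Real.log_pos ((one_lt_div (hεpos n)).mpr (hε1 n))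
  set s0 : ℝ := 2 * Real.log (1 / ε n) / n with hs0def
  have hs0pos : 0 < s0 := div_pos (by linarith) hnpos
  set r : ℝ := Real.sqrt s0 with hrdef
  have hrpos : 0 < r := Real.sqrt_pos.mpr hs0pos
  have hr2 : r ^ 2 = s0 := Real.sq_sqrt hs0pos.le
  set δ : ℝ := c * r with hδdef
  set t : ℝ := r / c with htdef
  have htpos : 0 < t := div_pos hrpos hcpos
  have htδ : t * δ = s0 := by
    have h : t * δ = r ^ 2 := by rw [htdef, hδdef]; field_simp
    rw [h, hr2]
  have ht2c2 : t ^ 2 * c ^ 2 = s0 := by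
    rw [htdef, div_pow, div_mul_cancel₀ _ (pow_ne_zero 2 hcpos.ne'), hr2]
  have hns0 : (n:ℝ) * s0 = 2 * Real.log (1 / ε n) := by
    rw [hs0def]; field_simp
  set A : Finset (Fin n → X) :=
    Finset.univ.filter
      (fun x => (∀ i, 0 < P (x i)) ∧ (n:ℝ) * (KL P Q - δ) ≤ ∑ i, L (x i)) with hAdef
  have hmemA : ∀ x ∈ A, (∀ i, 0 < P (x i)) ∧ (n:ℝ) * (KL P Q - δ) ≤ ∑ i, L (x i) := by
    intro x hx
    rw [hAdef, Finset.mem_filter] at hx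
    exact hx.2
  -- Type I feasibility via Chernoff + Hoeffding
  have hfeas : ∑ x ∈ Aᶜ, prodP P n x ≤ ε n := by
    have hpt : ∀ x ∈ Aᶜ, prodP P n x
        ≤ prodP P n x * Real.exp (t * ((n:ℝ) * (KL P Q - δ) - ∑ i, L (x i))) := by
      intro x hx
      rw [Finset.mem_compl, hAdef, Finset.mem_filter] at hx
      have hx' : ¬((∀ i, 0 < P (x i)) ∧ (n:ℝ) * (KL P Q - δ) ≤ ∑ i, L (x i)) := by
        intro hcontra
        exact hx ⟨Finset.mem_univ x, hcontra⟩
      have hprod0 : 0 ≤ prodP P n x := Finset.prod_nonneg fun i _ => hP0 _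
      rcases eq_or_lt_of_le hprod0 with h0 | h0
      · rw [← h0, zero_mul]
      · have hall : ∀ i, 0 < P (x i) := by
          intro i
          rcases eq_or_lt_of_le (hP0 (x i)) with h | h
          · exfalso
            have hz : prodP P n x = 0 := by
              unfold prodP
              exact Finset.prod_eq_zero (Finset.mem_univ i) h.symm
            rw [hz] at h0; exact lt_irrefl _ h0
          · exact h
        have hlt : ∑ i, L (x i) < (n:ℝ) * (KL P Q - δ) := by
          by_contra hge
          push_neg at hge
          exact hx' ⟨hall, hge⟩
        have h1 : (1:ℝ) ≤ Real.exp (t * ((n:ℝ) * (KL P Q - δ) - ∑ i, L (x i))) := by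
          apply Real.one_le_exp
          apply mul_nonneg htpos.le
          linarith
        exact le_mul_of_one_le_right hprod0 h1
    have hμ : ∑ y, P y * (- L y) = - KL P Q := by
      rw [hKL, ← Finset.sum_neg_distrib]
      apply Finset.sum_congr rfl
      intro y _
      ring
    calc ∑ x ∈ Aᶜ, prodP P n x
        ≤ ∑ x ∈ Aᶜ, prodP P n x * Real.exp (t * ((n:ℝ) * (KL P Q - δ) - ∑ i, L (x i))) :=
          Finset.sum_le_sum hpt
      _ ≤ ∑ x : Fin n → X, prodP P n x * Real.exp (t * ((n:ℝ) * (KL P Q - δ) - ∑ i, L (x i))) :=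
          Finset.sum_le_sum_of_subset_of_nonneg (Finset.subset_univ _)
            (fun x _ _ => mul_nonneg (Finset.prod_nonneg fun i _ => hP0 _) (Real.exp_nonneg _))
      _ = Real.exp (t * ((n:ℝ) * (KL P Q - δ)))
            * ∑ x : Fin n → X, ∏ i, (P (x i) * Real.exp (t * (- L (x i)))) := by
          rw [Finset.mul_sum]
          apply Finset.sum_congr rfl
          intro x _
          rw [Finset.prod_mul_distrib, ← Real.exp_sum]
          have h1 : ∑ i, t * (- L (x i)) = -(t * ∑ i, L (x i)) := by
            rw [← Finset.mul_sum, Finset.sum_neg_distrib, mul_neg]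
          rw [h1]
          have hE : Real.exp (t * ((n:ℝ) * (KL P Q - δ) - ∑ i, L (x i)))
              = Real.exp (t * ((n:ℝ) * (KL P Q - δ))) * Real.exp (-(t * ∑ i, L (x i))) := by
            rw [← Real.exp_add]
            congr 1
            ring
          rw [hE]
          unfold prodP
          ring
      _ = Real.exp (t * ((n:ℝ) * (KL P Q - δ)))
            * (∑ y, P y * Real.exp (t * (- L y))) ^ n := by
          rw [pow_sum_eq_sum_prod (fun y => P y * Real.exp (t * (- L y))) n]
      _ ≤ Real.exp (t * ((n:ℝ) * (KL P Q - δ)))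
            * (Real.exp (t * (∑ y, P y * (- L y)) + t ^ 2 * c ^ 2 / 2)) ^ n := by
          apply mul_le_mul_of_nonneg_left _ (Real.exp_nonneg _)
          apply pow_le_pow_left₀
            (Finset.sum_nonneg fun y _ => mul_nonneg (hP0 y) (Real.exp_nonneg _))
          exact hoeffding_lemma_finite P (fun y => - L y) hP0 hP1 c t hcpos
            (fun y hy => by rw [abs_neg]; exact hLle y hy)
      _ = ε n := by
          rw [hμ, ← Real.exp_nat_mul, ← Real.exp_add]
          have hkey : t * ((n:ℝ) * (KL P Q - δ)) + (n:ℝ) * (t * (- KL P Q) + t ^ 2 * c ^ 2 / 2)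
              = Real.log (ε n) := by
            have hlog1 : Real.log (ε n) = - Real.log (1 / ε n) := by
              rw [one_div, Real.log_inv, neg_neg]
            rw [hlog1]
            linear_combination (-(n:ℝ)) * htδ + ((n:ℝ)/2) * ht2c2 + (-(1:ℝ)/2) * hns0
          rw [hkey, Real.exp_log (hεpos n)]
  -- Type II bound
  have hA_sumP : ∑ x ∈ A, prodP P n x ≤ 1 := by
    have h1 : ∑ x : Fin n → X, prodP P n x = 1 := by
      unfold prodP
      rw [pow_sum_eq_sum_prod P n, hP1, one_pow]
    calc ∑ x ∈ A, prodP P n x ≤ ∑ x : Fin n → X, prodP P n x :=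
          Finset.sum_le_sum_of_subset_of_nonneg (Finset.subset_univ _)
            (fun x _ _ => Finset.prod_nonneg fun i _ => hP0 _)
    _ = 1 := h1
  have hQA : ∑ x ∈ A, prodP Q n x ≤ Real.exp (-((n:ℝ) * (KL P Q - δ))) := by
    have hpt : ∀ x ∈ A, prodP Q n x ≤ Real.exp (-((n:ℝ) * (KL P Q - δ))) * prodP P n x := by
      intro x hx
      obtain ⟨hall, hsum⟩ := hmemA x hx
      have hQall : ∀ i, 0 < Q (x i) := by
        intro i
        rcases eq_or_lt_of_le (hQ0 (x i)) with h | h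
        · exact absurd (hac _ h.symm) (hall i).ne'
        · exact h
      have hid : prodP P n x = Real.exp (∑ i, L (x i)) * prodP Q n x := by
        rw [Real.exp_sum]
        unfold prodP
        rw [← Finset.prod_mul_distrib]
        apply Finset.prod_congr rfl
        intro i _
        simp only [hLdef]
        rw [Real.exp_log (div_pos (hall i) (hQall i)), div_mul_cancel₀ _ (hQall i).ne']
      have hQval : prodP Q n x = Real.exp (-∑ i, L (x i)) * prodP P n x := by
        rw [hid, Real.exp_neg, ← mul_assoc, inv_mul_cancel₀ (Real.exp_ne_zero _), one_mul]
      rw [hQval]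
      apply mul_le_mul_of_nonneg_right _ (Finset.prod_nonneg fun i _ => hP0 _)
      exact Real.exp_le_exp.mpr (by linarith)
    calc ∑ x ∈ A, prodP Q n x
        ≤ ∑ x ∈ A, Real.exp (-((n:ℝ) * (KL P Q - δ))) * prodP P n x := Finset.sum_le_sum hpt
      _ = Real.exp (-((n:ℝ) * (KL P Q - δ))) * ∑ x ∈ A, prodP P n x := by rw [Finset.mul_sum]
      _ ≤ Real.exp (-((n:ℝ) * (KL P Q - δ))) * 1 :=
          mul_le_mul_of_nonneg_left hA_sumP (Real.exp_nonneg _)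
      _ = _ := mul_one _
  -- properties of beta
  set S : Set ℝ := {b : ℝ | ∃ B : Finset (Fin n → X),
    (∑ x ∈ Bᶜ, prodP P n x) ≤ ε n ∧ b = ∑ x ∈ B, prodP Q n x} with hSdef
  have hbeta_eq : beta P Q n (ε n) = sInf S := rfl
  have hSne : S.Nonempty := by
    refine ⟨∑ x : Fin n → X, prodP Q n x, ⟨Finset.univ, ?_, rfl⟩⟩
    rw [Finset.compl_univ, Finset.sum_empty]
    exact (hεpos n).le
  have hlbS : ∀ b ∈ S, q ^ n ≤ b := by
    rintro b ⟨B, hB, rfl⟩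
    have htotal : ∑ x ∈ B, prodP P n x + ∑ x ∈ Bᶜ, prodP P n x = 1 := by
      rw [Finset.sum_add_sum_compl]
      unfold prodP
      rw [pow_sum_eq_sum_prod P n, hP1, one_pow]
    have hpos : ∑ x ∈ B, (fun _ => (0:ℝ)) x < ∑ x ∈ B, prodP P n x := by
      simp only [Finset.sum_const, smul_zero]
      linarith [hε1 n, hB]
    obtain ⟨x0, hx0B, hx0⟩ := Finset.exists_lt_of_sum_lt hpos
    have hPall : ∀ i, 0 < P (x0 i) := by
      intro i
      rcases eq_or_lt_of_le (hP0 (x0 i)) with h | h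
      · exfalso
        have hz : prodP P n x0 = 0 := by
          unfold prodP
          exact Finset.prod_eq_zero (Finset.mem_univ i) h.symm
        rw [hz] at hx0
        exact lt_irrefl _ hx0
      · exact h
    have hQall : ∀ i, 0 < Q (x0 i) := by
      intro i
      rcases eq_or_lt_of_le (hQ0 (x0 i)) with h | h
      · exact absurd (hac _ h.symm) (hPall i).ne'
      · exact h
    have hx0Q : q ^ n ≤ prodP Q n x0 := by
      unfold prodP
      calc q ^ n = ∏ _i : Fin n, q := by
            rw [Finset.prod_const, Finset.card_univ, Fintype.card_fin]
      _ ≤ ∏ i, Q (x0 i) :=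
            Finset.prod_le_prod (fun i _ => hqpos.le) (fun i _ => hqle _ (hQall i))
    calc q ^ n ≤ prodP Q n x0 := hx0Q
    _ ≤ ∑ x ∈ B, prodP Q n x :=
          Finset.single_le_sum (f := fun x => prodP Q n x)
            (fun x _ => Finset.prod_nonneg fun i _ => hQ0 _) hx0B
  have hbdd : BddBelow S := ⟨q ^ n, hlbS⟩
  have hbeta_pos : 0 < beta P Q n (ε n) := by
    rw [hbeta_eq]
    exact lt_of_lt_of_le (pow_pos hqpos n) (le_csInf hSne hlbS)
  have hmemS : (∑ x ∈ A, prodP Q n x) ∈ S := ⟨A, hfeas, rfl⟩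
  have hbeta_le : beta P Q n (ε n) ≤ Real.exp (-((n:ℝ) * (KL P Q - δ))) := by
    rw [hbeta_eq]
    exact (csInf_le hbdd hmemS).trans hQA
  have hlogβ : Real.log (beta P Q n (ε n)) ≤ -((n:ℝ) * (KL P Q - δ)) := by
    calc Real.log (beta P Q n (ε n))
        ≤ Real.log (Real.exp (-((n:ℝ) * (KL P Q - δ)))) :=
          (Real.log_le_log_iff hbeta_pos (Real.exp_pos _)).mpr hbeta_le
      _ = _ := Real.log_exp _
  have hfinal : KL P Q - δ ≤ - Real.log (beta P Q n (ε n)) / n := by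
    rw [le_div_iff₀ hnpos]
    nlinarith [hlogβ]
  have hring : -(1/(n:ℝ)) * Real.log (beta P Q n (ε n))
      = - Real.log (beta P Q n (ε n)) / n := by ring
  linarith [hfinal, hring.ge, hring.le]
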